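/- arXiv:2404.17116 — 3 statements merged into one kernel-verified Lean document; each statement's English description precedes it below -/
import Mathlib

section
/- In a locally finite connected graph G (every vertex has finite degree), two rays are equivalent under the end relation if and only if they are equivalent under the edge-end relation. -/
open SimpleGraph

universe u

/-- A ray (one-way infinite path) in a graph. -/
structure GraphRay {V : Type u} (G : SimpleGraph V) : Type u where
  f : ℕ → V
  inj : Function.Injective f
  adj : ∀ n : ℕ, G.Adj (f n) (f (n + 1))

/-- The graph `G - S`: delete a set of vertices (they become isolated). -/
def SimpleGraph.vDel {V : Type u} (G : SimpleGraph V) (S : Set V) : SimpleGraph V where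
  Adj u v := G.Adj u v ∧ u ∉ S ∧ v ∉ S
  symm := ⟨fun u v h => ⟨h.1.symm, h.2.2, h.2.1⟩⟩
  loopless := ⟨fun v h => G.loopless.1 v h.1⟩

/-- The graph `G - F`: delete a set of edges. -/
def SimpleGraph.eDel {V : Type u} (G : SimpleGraph V) (F : Set (Sym2 V)) : SimpleGraph V where
  Adj u v := G.Adj u v ∧ s(u, v) ∉ F
  symm := ⟨fun u v h => ⟨h.1.symm, by rw [Sym2.eq_swap]; exact h.2⟩⟩
  loopless := ⟨fun v h => G.loopless.1 v h.1⟩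

/-- Tails of the rays `r` and `s` lie in the same connected component of `G - S`. -/
def GraphRay.VConn {V : Type u} (G : SimpleGraph V) (S : Set V) (r s : GraphRay G) : Prop :=
  ∃ N M : ℕ, (∀ n, N ≤ n → r.f n ∉ S) ∧ (∀ m, M ≤ m → s.f m ∉ S) ∧
    (G.vDel S).Reachable (r.f N) (s.f M)

/-- Tails of the rays `r` and `s` lie in the same connected component of `G - F`. -/
def GraphRay.EConn {V : Type u} (G : SimpleGraph V) (F : Set (Sym2 V)) (r s : GraphRay G) : Prop :=
  ∃ N M : ℕ, (∀ n, N ≤ n → s(r.f n, r.f (n + 1)) ∉ F) ∧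
    (∀ m, M ≤ m → s(s.f m, s.f (m + 1)) ∉ F) ∧
    (G.eDel F).Reachable (r.f N) (s.f M)

/-- The end relation: no finite vertex set separates the two rays. -/
def endEquiv {V : Type u} (G : SimpleGraph V) (r s : GraphRay G) : Prop :=
  ∀ S : Set V, S.Finite → GraphRay.VConn G S r s

/-- The edge-end relation: no finite edge set separates the two rays. -/
def edgeEndEquiv {V : Type u} (G : SimpleGraph V) (r s : GraphRay G) : Prop :=
  ∀ F : Set (Sym2 V), F.Finite → F ⊆ G.edgeSet → GraphRay.EConn G F r s

/-- `v` dominates the ray `r`: no finite vertex set avoiding `v` separates `v` from a tail of `r`. -/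
def dominates {V : Type u} (G : SimpleGraph V) (v : V) (r : GraphRay G) : Prop :=
  ∀ S : Set V, S.Finite → v ∉ S →
    ∃ N : ℕ, (∀ n, N ≤ n → r.f n ∉ S) ∧ (G.vDel S).Reachable v (r.f N)

/-- `v` edge-dominates the ray `r`: no finite edge set separates `v` from a tail of `r`. -/
def edgeDominates {V : Type u} (G : SimpleGraph V) (v : V) (r : GraphRay G) : Prop :=
  ∀ F : Set (Sym2 V), F.Finite → F ⊆ G.edgeSet →
    ∃ N : ℕ, (∀ n, N ≤ n → s(r.f n, r.f (n + 1)) ∉ F) ∧ (G.eDel F).Reachable v (r.f N)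

/-- The end space of `G` as a quotient of the set of rays. -/
def EndSpace {V : Type u} (G : SimpleGraph V) : Type u := Quot (endEquiv G)

/-- The edge-end space of `G` as a quotient of the set of rays. -/
def EdgeEndSpace {V : Type u} (G : SimpleGraph V) : Type u := Quot (edgeEndEquiv G)

/-- The end topology, generated by the sets `Ω(S, [r])` for finite `S ⊆ V(G)`. -/
instance {V : Type u} (G : SimpleGraph V) : TopologicalSpace (EndSpace G) :=
  TopologicalSpace.generateFrom
    {O | ∃ (S : Set V) (_ : S.Finite) (r : GraphRay G),
      O = {x | ∃ s : GraphRay G, x = Quot.mk (endEquiv G) s ∧ GraphRay.VConn G S r s}}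

/-- The edge-end topology, generated by the sets `Ω_E(F, [r]_E)` for finite `F ⊆ E(G)`. -/
instance {V : Type u} (G : SimpleGraph V) : TopologicalSpace (EdgeEndSpace G) :=
  TopologicalSpace.generateFrom
    {O | ∃ (F : Set (Sym2 V)) (_ : F.Finite) (_ : F ⊆ G.edgeSet) (r : GraphRay G),
      O = {x | ∃ s : GraphRay G, x = Quot.mk (edgeEndEquiv G) s ∧ GraphRay.EConn G F r s}}

/-- in a locally finite connected graph, the end relation and the
edge-end relation coincide. -/
theorem endEquiv_iff_edgeEndEquiv_of_locallyFinite {V : Type u} (G : SimpleGraph V)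
    (hconn : G.Connected) (hlf : ∀ v : V, (G.neighborSet v).Finite)
    (r s : GraphRay G) :
    endEquiv G r s ↔ edgeEndEquiv G r s := by
  constructor
  · -- endEquiv → edgeEndEquiv
    intro h F hF _
    -- S := all endpoints of edges in F
    set S : Set V := ⋃ e ∈ F, {v | v ∈ e} with hSdef
    have hS : S.Finite := hF.biUnion (fun e _ => e.ind (fun a b => (Set.finite_singleton a |>.insert b).subset (by
      intro x hx
      rcases Sym2.mem_iff.mp hx with h1 | h1 <;> simp [h1])) )
    obtain ⟨N, M, h1, h2, h3⟩ := h S hS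
    have hmem : ∀ v : V, ∀ e ∈ F, v ∈ e → v ∈ S := by
      intro v e he hv
      exact Set.mem_biUnion he hv
    refine ⟨N, M, ?_, ?_, ?_⟩
    · intro n hn hF'
      exact h1 n hn (hmem _ _ hF' (Sym2.mem_mk_left _ _))
    · intro m hm hF'
      exact h2 m hm (hmem _ _ hF' (Sym2.mem_mk_left _ _))
    · refine h3.mono ?_
      intro u v huv
      exact ⟨huv.1, fun hc => huv.2.1 (hmem _ _ hc (Sym2.mem_mk_left _ _))⟩
  · -- edgeEndEquiv → endEquiv
    intro h S hS
    set F : Set (Sym2 V) := ⋃ v ∈ S, G.incidenceSet v with hFdef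
    have hFin : ∀ v : V, (G.incidenceSet v).Finite := by
      intro v
      refine ((hlf v).image (fun w => s(v, w))).subset ?_
      rintro e ⟨he, hv⟩
      induction e with
      | _ a b =>
        rcases Sym2.mem_iff.mp hv with h1 | h1
        · subst h1; exact ⟨b, G.mem_edgeSet.mp he, rfl⟩
        · subst h1; exact ⟨a, (G.mem_edgeSet.mp he).symm, Sym2.eq_swap⟩
    have hF : F.Finite := hS.biUnion (fun v _ => hFin v)
    have hFsub : F ⊆ G.edgeSet := by
      intro e he
      rcases Set.mem_iUnion₂.mp he with ⟨v, _, h1, _⟩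
      exact h1
    obtain ⟨N, M, h1, h2, h3⟩ := h F hF hFsub
    have hkey : ∀ u v : V, G.Adj u v → s(u, v) ∉ F → u ∉ S := by
      intro u v hadj hnF hu
      exact hnF (Set.mem_biUnion hu ⟨G.mem_edgeSet.mpr hadj, Sym2.mem_mk_left _ _⟩)
    refine ⟨N, M, ?_, ?_, ?_⟩
    · intro n hn
      exact hkey _ _ (r.adj n) (h1 n hn)
    · intro m hm
      exact hkey _ _ (s.adj m) (h2 m hm)
    · refine h3.mono ?_
      intro u v huv
      exact ⟨huv.1, hkey _ _ huv.1 huv.2, hkey _ _ huv.1.symm (by rw [Sym2.eq_swap]; exact huv.2)⟩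
end

section
/- Let G be a graph, H the graph obtained from G by duplicating each vertex v in a set D ⊆ V(G) to a pair v, v' joined by an edge, with the other edges of G rearranged via an injective map τ : E(G) → E(H) (each former edge at v reattached to exactly one of v, v'). If K' is a connected subgraph of H, then the subgraph K of G whose edge set is τ⁻¹(E(K')) (with its endpoints as vertices) is connected. -/
open SimpleGraph

universe u

/-- In the duplication `H` of `G` along `D` (with choice function `σ`), the endpoint on
the `v`-side of the former edge `vu`: for `v ∈ D` it is `v = Sum.inl v` or its copy
`v' = Sum.inr v` according to the bipartition `σ v`, and `v` itself otherwise. -/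
noncomputable def att2 {V : Type u} (D : Set V) (σ : V → V → Bool) (v u : V) : V ⊕ V :=
  haveI := Classical.dec (v ∈ D)
  if v ∈ D then (if σ v u then Sum.inl v else Sum.inr v) else Sum.inl v

/-- The graph `H` obtained from `G` by duplicating each `v ∈ D` to a pair `v, v'`
joined by an edge, each former edge at `v` reattached to exactly one of `v, v'`. -/
noncomputable def dupGraph {V : Type u} (G : SimpleGraph V) (D : Set V)
    (σ : V → V → Bool) : SimpleGraph (V ⊕ V) :=
  SimpleGraph.fromRel (fun x y =>
    (∃ v ∈ D, x = Sum.inl v ∧ y = Sum.inr v) ∨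
    (∃ u v : V, G.Adj u v ∧ x = att2 D σ u v ∧ y = att2 D σ v u))

/-- The subgraph `K` of `G` whose edges form `τ⁻¹(E(K'))`, for a subgraph `K'` of `H`. -/
noncomputable def preSub {V : Type u} (G : SimpleGraph V) (D : Set V) (σ : V → V → Bool)
    (K' : (dupGraph G D σ).Subgraph) : G.Subgraph where
  verts := {u | ∃ v : V, G.Adj u v ∧ K'.Adj (att2 D σ u v) (att2 D σ v u)}
  Adj u v := G.Adj u v ∧ K'.Adj (att2 D σ u v) (att2 D σ v u)
  adj_sub h := h.1
  edge_vert h := ⟨_, h⟩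
  symm := ⟨fun u v h => ⟨h.1.symm, h.2.symm⟩⟩

lemma att2_pi {V : Type u} (D : Set V) (σ : V → V → Bool) (u v : V) :
    Sum.elim id id (att2 D σ u v) = u := by
  unfold att2
  split
  · split <;> rfl
  · rfl

lemma dup_step {V : Type u} (G : SimpleGraph V) (D : Set V) (σ : V → V → Bool)
    (K' : (dupGraph G D σ).Subgraph) {x y : V ⊕ V} (hxy : K'.Adj x y) :
    Sum.elim id id x = Sum.elim id id y ∨
      (preSub G D σ K').Adj (Sum.elim id id x) (Sum.elim id id y) := by
  have h := hxy.adj_sub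
  simp only [dupGraph, SimpleGraph.fromRel_adj] at h
  obtain ⟨hne, h | h⟩ := h
  · rcases h with ⟨v, hv, rfl, rfl⟩ | ⟨u, v, huv, rfl, rfl⟩
    · left; rfl
    · right; rw [att2_pi, att2_pi]; exact ⟨huv, hxy⟩
  · rcases h with ⟨v, hv, rfl, rfl⟩ | ⟨u, v, huv, rfl, rfl⟩
    · left; rfl
    · right; rw [att2_pi, att2_pi]; exact ⟨huv.symm, hxy⟩

lemma dup_walk_proj {V : Type u} (G : SimpleGraph V) (D : Set V) (σ : V → V → Bool)
    (K' : (dupGraph G D σ).Subgraph) :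
    ∀ {x y : K'.verts} (_ : K'.coe.Walk x y)
      (hx : Sum.elim id id x.1 ∈ (preSub G D σ K').verts)
      (hy : Sum.elim id id y.1 ∈ (preSub G D σ K').verts),
      (preSub G D σ K').coe.Reachable ⟨_, hx⟩ ⟨_, hy⟩ := by
  intro x y p
  induction p with
  | nil => intro hx hy; rfl
  | @cons a m c h p ih =>
    intro hx hy
    rcases dup_step G D σ K' h with heq | hadj
    · have hm : Sum.elim id id m.1 ∈ (preSub G D σ K').verts := heq ▸ hx
      have hr := ih hm hy
      have he : (⟨Sum.elim id id a.1, hx⟩ : (preSub G D σ K').verts)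
          = ⟨Sum.elim id id m.1, hm⟩ := Subtype.ext heq
      rw [he]; exact hr
    · have hm : Sum.elim id id m.1 ∈ (preSub G D σ K').verts :=
        (preSub G D σ K').edge_vert hadj.symm
      exact Reachable.trans (SimpleGraph.Adj.reachable
        (show (preSub G D σ K').coe.Adj ⟨_, hx⟩ ⟨_, hm⟩ from hadj)) (ih hm hy)

/-- if `K'` is a connected subgraph of the duplication `H`, then the
subgraph of `G` with edge set `τ⁻¹(E(K'))` is connected. -/
theorem preSub_preconnected {V : Type u} (G : SimpleGraph V) (D : Set V)
    (σ : V → V → Bool) (K' : (dupGraph G D σ).Subgraph) (hK' : K'.Connected) :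
    (preSub G D σ K').coe.Preconnected := by
  rintro ⟨u₁, v₁, h1, hK1⟩ ⟨u₂, v₂, h2, hK2⟩
  have hx' : att2 D σ u₁ v₁ ∈ K'.verts := K'.edge_vert hK1
  have hy' : att2 D σ u₂ v₂ ∈ K'.verts := K'.edge_vert hK2
  obtain ⟨p⟩ := hK'.preconnected ⟨_, hx'⟩ ⟨_, hy'⟩
  have hx : Sum.elim id id (att2 D σ u₁ v₁) ∈ (preSub G D σ K').verts := by
    rw [att2_pi]; exact ⟨v₁, h1, hK1⟩
  have hy : Sum.elim id id (att2 D σ u₂ v₂) ∈ (preSub G D σ K').verts := by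
    rw [att2_pi]; exact ⟨v₂, h2, hK2⟩
  have hr := dup_walk_proj G D σ K' p hx hy
  have e1 : (⟨Sum.elim id id (att2 D σ u₁ v₁), hx⟩ : (preSub G D σ K').verts)
      = ⟨u₁, ⟨v₁, h1, hK1⟩⟩ := Subtype.ext (att2_pi D σ u₁ v₁)
  have e2 : (⟨Sum.elim id id (att2 D σ u₂ v₂), hy⟩ : (preSub G D σ K').verts)
      = ⟨u₂, ⟨v₂, h2, hK2⟩⟩ := Subtype.ext (att2_pi D σ u₂ v₂)
  rw [e1, e2] at hr
  exact hr
end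

section
/- Let T be a special order tree (a countable union of antichains). For t ∈ T let [t,∅] = {r ∈ R(T) : t ∈ r}, where R(T) is the set of high-rays of T with the topology generated by the sets [t,F] = {r : t ∈ r and t' ∉ r for all t' ∈ F}, F a finite set of tops of r. Then C = {[t,∅] : t ∈ T} is a nested, noetherian, σ-disjoint clopen subbase for R(T). -/
/-- A high-ray of an order tree: a down-closed chain of cofinality `ω`. -/
def IsHighRay {T : Type*} [PartialOrder T] (r : Set T) : Prop :=
  IsChain (· ≤ ·) r ∧ (∀ x ∈ r, ∀ y, y ≤ x → y ∈ r) ∧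
    ∃ f : ℕ → T, (∀ n, f n ∈ r) ∧ (∀ n, f n < f (n + 1)) ∧ ∀ x ∈ r, ∃ n, x ≤ f n

/-- The set of high-rays of `T`. -/
def HighRays (T : Type*) [PartialOrder T] : Type _ := {r : Set T // IsHighRay r}

/-- `t` is a top of the high-ray `r`: a minimal element strictly above every node of `r`. -/
def IsTopOf {T : Type*} [PartialOrder T] (r : Set T) (t : T) : Prop :=
  (∀ x ∈ r, x < t) ∧ ∀ t' : T, (∀ x ∈ r, x < t') → t' ≤ t → t' = t

/-- The basic set `[t, F] = {r : t ∈ r, t' ∉ r for all t' ∈ F}`. -/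
def hrBasic {T : Type*} [PartialOrder T] (t : T) (F : Finset T) : Set (HighRays T) :=
  {r | t ∈ r.1 ∧ ∀ t' ∈ F, t' ∉ r.1}

/-- The generating family of the high-ray space topology: all sets `[t, F]` where
`t` lies on some high-ray `r` and `F` is a finite set of tops of `r`. -/
def hrGen (T : Type*) [PartialOrder T] : Set (Set (HighRays T)) :=
  {O | ∃ (t : T) (F : Finset T) (r : HighRays T),
    t ∈ r.1 ∧ (∀ t' ∈ F, IsTopOf r.1 t') ∧ O = hrBasic t F}

/-- The topology of the high-ray space `R(T)`. -/
instance (T : Type*) [PartialOrder T] : TopologicalSpace (HighRays T) :=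
  TopologicalSpace.generateFrom (hrGen T)

/-- `T` is an order tree: the strict predecessors of any node form a well-ordered chain. -/
def IsOrderTree (T : Type*) [PartialOrder T] : Prop :=
  ∀ t : T, IsChain (· ≤ ·) (Set.Iio t) ∧ (Set.Iio t).WellFoundedOn (· < ·)

/-- `T` is special: a countable union of antichains. -/
def IsSpecialTree (T : Type*) [PartialOrder T] : Prop :=
  ∃ A : ℕ → Set T, (⋃ n, A n) = Set.univ ∧ ∀ n, IsAntichain (· ≤ ·) (A n)

section Aux
variable {T : Type*} [PartialOrder T]

lemma hr_down (r : HighRays T) {s t : T} (h : s ≤ t) (ht : t ∈ r.1) : s ∈ r.1 :=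
  r.2.2.1 t ht s h

lemma hr_subset_of_le {s t : T} (h : s ≤ t) :
    hrBasic t (∅ : Finset T) ⊆ hrBasic s (∅ : Finset T) :=
  fun r hr => ⟨hr_down r h hr.1, by simp⟩

lemma hr_disjoint_of_incomp {s t : T} (h1 : ¬ s ≤ t) (h2 : ¬ t ≤ s) :
    Disjoint (hrBasic s (∅ : Finset T)) (hrBasic t (∅ : Finset T)) := by
  rw [Set.disjoint_left]
  rintro r ⟨hs, -⟩ ⟨ht, -⟩
  rcases eq_or_ne s t with rfl | hne
  · exact h1 le_rfl
  · rcases r.2.1 hs ht hne with h | h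
    · exact h1 h
    · exact h2 h

/-- In an order tree, any nonempty subset of a chain has a least element. -/
lemma hr_exists_min (htree : IsOrderTree T) {C S : Set T}
    (hC : IsChain (· ≤ ·) C) (hS : S ⊆ C) (hne : S.Nonempty) :
    ∃ m ∈ S, ∀ s ∈ S, m ≤ s := by
  obtain ⟨s₁, hs₁⟩ := hne
  have hcomp : ∀ s ∈ S, ∀ s' ∈ S, s ≤ s' ∨ s' ≤ s := by
    intro s hs s' hs'
    rcases eq_or_ne s s' with rfl | hne'
    · exact Or.inl le_rfl
    · exact hC (hS hs) (hS hs') hne'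
  by_cases h : (S ∩ Set.Iio s₁).Nonempty
  · have hwf := (htree s₁).2
    rw [Set.wellFoundedOn_iff] at hwf
    obtain ⟨m, hm, hmin⟩ := hwf.has_min (S ∩ Set.Iio s₁) h
    refine ⟨m, hm.1, fun s hs => ?_⟩
    rcases hcomp m hm.1 s hs with h1 | h1
    · exact h1
    · rcases eq_or_ne s m with rfl | hne'
      · exact le_rfl
      · exact absurd (⟨lt_of_le_of_ne h1 hne', lt_of_le_of_lt h1 hm.2, hm.2⟩ :
          s < m ∧ s ∈ Set.Iio s₁ ∧ m ∈ Set.Iio s₁) (hmin s ⟨hs, lt_of_le_of_lt h1 hm.2⟩)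
  · refine ⟨s₁, hs₁, fun s hs => ?_⟩
    rcases hcomp s₁ hs₁ s hs with h1 | h1
    · exact h1
    · rcases eq_or_ne s s₁ with rfl | hne'
      · exact le_rfl
      · exact absurd ⟨hs, lt_of_le_of_ne h1 hne'⟩ (fun hx => h ⟨s, hx⟩)

lemma hr_isOpen (t : T) : IsOpen (hrBasic t (∅ : Finset T)) := by
  by_cases h : ∃ r : HighRays T, t ∈ r.1
  · obtain ⟨r, hr⟩ := h
    exact TopologicalSpace.isOpen_generateFrom_of_mem ⟨t, ∅, r, hr, by simp, rfl⟩
  · have : hrBasic t (∅ : Finset T) = ∅ :=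
      Set.eq_empty_of_forall_notMem fun r hr => h ⟨r, hr.1⟩
    rw [this]; exact isOpen_empty

lemma hr_isClosed (htree : IsOrderTree T) (t : T) :
    IsClosed (hrBasic t (∅ : Finset T)) := by
  rw [← isOpen_compl_iff, isOpen_iff_forall_mem_open]
  intro r hr
  have htr : t ∉ r.1 := fun h => hr ⟨h, by simp⟩
  by_cases hcase : ∀ x ∈ r.1, x ≤ t
  · -- every element of r is below t; find a top of r below t
    have hstrict : ∀ x ∈ r.1, x < t := fun x hx =>
      lt_of_le_of_ne (hcase x hx) (fun e => htr (e ▸ hx))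
    set S : Set T := {s | s ≤ t ∧ ∀ x ∈ r.1, x < s} with hSdef
    have hChain : IsChain (· ≤ ·) (Set.Iic t) := by
      intro a ha b hb hne
      rcases eq_or_ne a t with rfl | ha'
      · exact Or.inr hb
      · rcases eq_or_ne b t with rfl | hb'
        · exact Or.inl ha
        · exact (htree t).1 (lt_of_le_of_ne ha ha') (lt_of_le_of_ne hb hb') hne
    have hSsub : S ⊆ Set.Iic t := fun s hs => hs.1
    have hSne : S.Nonempty := ⟨t, le_rfl, hstrict⟩
    obtain ⟨m, hmS, hmin⟩ := hr_exists_min htree hChain hSsub hSne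
    have hmtop : IsTopOf r.1 m := by
      refine ⟨hmS.2, fun t' ht' hle => ?_⟩
      exact le_antisymm hle (hmin t' ⟨le_trans hle hmS.1, ht'⟩)
    obtain ⟨f, hf, -, -⟩ := r.2.2.2
    have hmr : m ∉ r.1 := fun h => lt_irrefl m (hmS.2 m h)
    refine ⟨hrBasic (f 0) {m}, ?_, ?_, ⟨hf 0, by simpa using hmr⟩⟩
    · rintro r2 ⟨-, hr2⟩ ⟨ht2, -⟩
      exact hr2 m (by simp) (hr_down r2 hmS.1 ht2)
    · exact TopologicalSpace.isOpen_generateFrom_of_mem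
        ⟨f 0, {m}, r, hf 0, by simpa using hmtop, rfl⟩
  · push_neg at hcase
    obtain ⟨x, hx, hxt⟩ := hcase
    have htx : ¬ t ≤ x := fun h => htr (hr_down r h hx)
    refine ⟨hrBasic x (∅ : Finset T), ?_, hr_isOpen x, ⟨hx, by simp⟩⟩
    exact fun r2 h2 h3 => Set.disjoint_left.1 (hr_disjoint_of_incomp hxt htx) h2 h3

end Aux

section Rest
variable {T : Type*} [PartialOrder T]

lemma hr_noetherian (htree : IsOrderTree T) (c : Set (Set (HighRays T)))
    (hc : c ⊆ Set.range (fun t : T => hrBasic t (∅ : Finset T)))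
    (hchain : IsChain (· ⊆ ·) c) (hne : c.Nonempty) :
    ∃ m ∈ c, ∀ x ∈ c, x ⊆ m := by
  by_cases hex : ∃ X ∈ c, X.Nonempty
  · obtain ⟨X₀, hX₀c, r₀, hr₀⟩ := hex
    obtain ⟨t₀, ht₀⟩ := hc hX₀c
    simp only at ht₀
    set S : Set T := {s | s ∈ r₀.1 ∧ hrBasic s (∅ : Finset T) ∈ c ∧
      X₀ ⊆ hrBasic s (∅ : Finset T)} with hSdef
    have ht₀r : t₀ ∈ r₀.1 := by
      have h := hr₀; rw [← ht₀] at h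
      exact h.1
    have hSne : S.Nonempty := ⟨t₀, ht₀r, by rw [ht₀]; exact hX₀c, by rw [ht₀]⟩
    have hSsub : S ⊆ r₀.1 := fun s hs => hs.1
    obtain ⟨m, hmS, hmin⟩ := hr_exists_min htree r₀.2.1 hSsub hSne
    refine ⟨hrBasic m (∅ : Finset T), hmS.2.1, fun X hX => ?_⟩
    rcases eq_or_ne X (hrBasic m (∅ : Finset T)) with rfl | hne'
    · exact subset_rfl
    rcases hchain hX hmS.2.1 hne' with h | h
    · exact h
    · -- hrBasic m ∅ ⊆ X; in particular X₀ ⊆ X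
      obtain ⟨s, hs⟩ := hc hX
      simp only at hs
      have hX₀X : X₀ ⊆ X := hmS.2.2.trans h
      have hsr : s ∈ r₀.1 := by
        have := hX₀X hr₀; rw [← hs] at this; exact this.1
      have hsS : s ∈ S := ⟨hsr, by rw [hs]; exact hX, by rw [hs]; exact hX₀X⟩
      rw [← hs]
      exact hr_subset_of_le (hmin s hsS)
  · push_neg at hex
    obtain ⟨X, hX⟩ := hne
    exact ⟨X, hX, fun Y hY => by rw [hex Y hY]; exact Set.empty_subset _⟩

lemma hr_topology_eq (htree : IsOrderTree T) :
    (inferInstance : TopologicalSpace (HighRays T)) =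
      TopologicalSpace.generateFrom
        (Set.range (fun t : T => hrBasic t (∅ : Finset T)) ∪
          compl '' Set.range (fun t : T => hrBasic t (∅ : Finset T))) := by
  set g2 : Set (Set (HighRays T)) :=
    Set.range (fun t : T => hrBasic t (∅ : Finset T)) ∪
      compl '' Set.range (fun t : T => hrBasic t (∅ : Finset T)) with hg2
  have hopen2 : ∀ t : T, TopologicalSpace.GenerateOpen g2 (hrBasic t (∅ : Finset T)) :=
    fun t => .basic _ (Or.inl ⟨t, rfl⟩)
  have hopen2c : ∀ t : T, TopologicalSpace.GenerateOpen g2 ((hrBasic t (∅ : Finset T))ᶜ) :=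
    fun t => .basic _ (Or.inr ⟨_, ⟨t, rfl⟩, rfl⟩)
  refine le_antisymm ?_ ?_
  · -- instance ≤ generateFrom g2 : every member of g2 is open in instance
    apply le_generateFrom
    rintro s (⟨t, rfl⟩ | ⟨u, ⟨t, rfl⟩, rfl⟩)
    · exact hr_isOpen t
    · exact (hr_isClosed htree t).isOpen_compl
  · -- generateFrom g2 ≤ instance = generateFrom hrGen
    apply le_generateFrom
    rintro s ⟨t, F, r, htr, hF, rfl⟩
    have heq : hrBasic t F = hrBasic t (∅ : Finset T) ∩ ⋂ t' ∈ F, (hrBasic t' (∅ : Finset T))ᶜ := by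
      ext r2
      simp only [hrBasic, Set.mem_setOf_eq, Set.mem_inter_iff, Set.mem_iInter,
        Set.mem_compl_iff, Finset.notMem_empty, false_implies, implies_true, and_true]
    show TopologicalSpace.GenerateOpen g2 (hrBasic t F)
    rw [heq]
    refine .inter _ _ (hopen2 t) ?_
    classical
    clear heq hF
    induction F using Finset.induction_on with
    | empty => simpa using TopologicalSpace.GenerateOpen.univ
    | insert _ _ hnotmem ih =>
        rw [Finset.set_biInter_insert]
        exact .inter _ _ (hopen2c _) ih

end Rest

/-- for a special order tree `T`, the family `C = {[t,∅] : t ∈ T}` is a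
nested, noetherian, σ-disjoint clopen subbase for the high-ray space `R(T)`. -/
theorem hrBasic_special_subbase {T : Type*} [PartialOrder T]
    (htree : IsOrderTree T) (hspecial : IsSpecialTree T) :
    (∀ t : T, IsClopen (hrBasic t (∅ : Finset T))) ∧
    (∀ s t : T, Disjoint (hrBasic s (∅ : Finset T)) (hrBasic t (∅ : Finset T)) ∨
      hrBasic s (∅ : Finset T) ⊆ hrBasic t (∅ : Finset T) ∨
      hrBasic t (∅ : Finset T) ⊆ hrBasic s (∅ : Finset T)) ∧
    (∀ c : Set (Set (HighRays T)),
      c ⊆ Set.range (fun t : T => hrBasic t (∅ : Finset T)) →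
      IsChain (· ⊆ ·) c → c.Nonempty → ∃ m ∈ c, ∀ x ∈ c, x ⊆ m) ∧
    (∃ A : ℕ → Set T, (⋃ n, A n) = Set.univ ∧ ∀ n, (A n).Pairwise fun a b =>
      Disjoint (hrBasic a (∅ : Finset T)) (hrBasic b (∅ : Finset T))) ∧
    ((inferInstance : TopologicalSpace (HighRays T)) =
      TopologicalSpace.generateFrom
        (Set.range (fun t : T => hrBasic t (∅ : Finset T)) ∪
          compl '' Set.range (fun t : T => hrBasic t (∅ : Finset T)))) := by
  refine ⟨fun t => ⟨hr_isClosed htree t, hr_isOpen t⟩, ?_, hr_noetherian htree, ?_,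
    hr_topology_eq htree⟩
  · intro s t
    by_cases hst : s ≤ t
    · exact Or.inr (Or.inr (hr_subset_of_le hst))
    · by_cases hts : t ≤ s
      · exact Or.inr (Or.inl (hr_subset_of_le hts))
      · exact Or.inl (hr_disjoint_of_incomp hst hts)
  · obtain ⟨A, hA1, hA2⟩ := hspecial
    exact ⟨A, hA1, fun n a ha b hb hab =>
      hr_disjoint_of_incomp (hA2 n ha hb hab) (hA2 n hb ha hab.symm)⟩
end
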